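/- arXiv:2410.10536 — 11 statements merged into one kernel-verified Lean document; each statement's English description precedes it below -/
import Mathlib

section
/- Let L be an algebraic Nijenhuis operator on a Lie algebra g over a field K, and let v, w be eigenvectors of L with distinct eigenvalues λ ≠ μ. If L is diagonalizable with all eigenvalues pairwise distinct (regular semisimple), then [v,w] lies in the span of v and w. -/
lemma reprL_aux {K : Type*} [Field K] {g : Type*} [AddCommGroup g] [Module K g]
    {ι : Type*} [Fintype ι] (L : Module.End K g) (b : Module.Basis ι K g) (ev : ι → K)
    (hdiag : ∀ i, L (b i) = ev i • b i) (x : g) (i : ι) :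
    b.repr (L x) i = ev i * b.repr x i := by
  classical
  have hx : L x = ∑ j, b.repr x j • (ev j • b j) := by
    conv_lhs => rw [← b.sum_repr x]
    rw [map_sum]
    simp [hdiag]
  rw [hx, map_sum]
  simp only [map_smul, Finsupp.finset_sum_apply, Finsupp.smul_apply, b.repr_self,
    Finsupp.single_apply, smul_eq_mul, mul_ite, mul_one, mul_zero]
  rw [Finset.sum_ite_eq' Finset.univ i]
  simp [mul_comm]

lemma eig_index {K : Type*} [Field K] {g : Type*} [AddCommGroup g] [Module K g]
    {ι : Type*} [Fintype ι] (L : Module.End K g) (b : Module.Basis ι K g) (ev : ι → K)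
    (hev : Function.Injective ev)
    (hdiag : ∀ i, L (b i) = ev i • b i) {x : g} {c : K} (hx : x ≠ 0)
    (hLx : L x = c • x) :
    ∃ i0, ev i0 = c ∧ b.repr x i0 ≠ 0 ∧ ∀ i, i ≠ i0 → b.repr x i = 0 := by
  have key : ∀ i, ev i * b.repr x i = c * b.repr x i := by
    intro i
    rw [← reprL_aux L b ev hdiag x i, hLx, map_smul, Finsupp.smul_apply, smul_eq_mul]
  have hne : ∃ i0, b.repr x i0 ≠ 0 := by
    by_contra h
    push_neg at h
    apply hx
    apply b.repr.injective
    ext i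
    simp [h i]
  obtain ⟨i0, hi0⟩ := hne
  have hev0 : ev i0 = c := mul_right_cancel₀ hi0 (key i0)
  refine ⟨i0, hev0, hi0, fun i hi => ?_⟩
  by_contra h
  have hevic : ev i = c := mul_right_cancel₀ h (key i)
  exact hi (hev (hevic.trans hev0.symm))

/-- If `L` is a regular semisimple algebraic Nijenhuis operator (it has an eigenbasis with
pairwise distinct eigenvalues) and `v, w` are eigenvectors with distinct eigenvalues,
then `[v,w]` lies in the span of `v` and `w`. -/
theorem nijenhuis_bracket_mem_span
    {K : Type*} [Field K] {g : Type*} [LieRing g] [LieAlgebra K g]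
    {ι : Type*} [Fintype ι]
    (L : Module.End K g)
    (hN : ∀ x y : g, L ⁅L x, y⁆ + L ⁅x, L y⁆ - ⁅L x, L y⁆ - L (L ⁅x, y⁆) = 0)
    (b : Module.Basis ι K g) (ev : ι → K) (hev : Function.Injective ev)
    (hdiag : ∀ i, L (b i) = ev i • b i)
    (v w : g) (l m : K) (hv : v ≠ 0) (hw : w ≠ 0)
    (hLv : L v = l • v) (hLw : L w = m • w) (hlm : l ≠ m) :
    ⁅v, w⁆ ∈ Submodule.span K ({v, w} : Set g) := by
  classical
  obtain ⟨i0, hevi0, hvi0, hvrest⟩ := eig_index L b ev hev hdiag hv hLv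
  obtain ⟨j0, hevj0, hwj0, hwrest⟩ := eig_index L b ev hev hdiag hw hLw
  set u := ⁅v, w⁆ with hu
  have hNeq : (l + m) • L u - (l * m) • u - L (L u) = 0 := by
    have h := hN v w
    simp only [hLv, hLw, smul_lie, lie_smul, map_smul, smul_smul] at h
    rw [← h]
    module
  have hcoord : ∀ i, (ev i - l) * (ev i - m) * b.repr u i = 0 := by
    intro i
    have h := congrArg (fun z => b.repr z i) hNeq
    simp only [map_sub, map_smul, Finsupp.sub_apply, Finsupp.smul_apply, smul_eq_mul,
      Finsupp.coe_zero, Pi.zero_apply, map_zero] at h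
    rw [reprL_aux L b ev hdiag, reprL_aux L b ev hdiag, reprL_aux L b ev hdiag] at h
    linear_combination -h
  have hsupp : (↑(b.repr u).support : Set ι) ⊆ {i0, j0} := by
    intro i hi
    simp only [Finsupp.mem_support_iff, Finset.mem_coe] at hi
    rcases mul_eq_zero.1 (hcoord i) with h | h
    · rcases mul_eq_zero.1 h with h1 | h1
      · left; exact hev (by rw [sub_eq_zero] at h1; rw [h1, hevi0])
      · right; exact hev (by rw [sub_eq_zero] at h1; rw [h1, hevj0])
    · exact absurd h hi
  have humem : u ∈ Submodule.span K (b '' {i0, j0}) := b.mem_span_image.2 hsupp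
  have expand : ∀ (x : g) (k : ι), (∀ i, i ≠ k → b.repr x i = 0) → x = b.repr x k • b k := by
    intro x k hrest
    conv_lhs => rw [← b.sum_repr x]
    rw [Finset.sum_eq_single k (fun j _ hj => by rw [hrest j hj, zero_smul])
      (fun h => absurd (Finset.mem_univ k) h)]
  have hbv : b i0 ∈ Submodule.span K ({v, w} : Set g) := by
    obtain ⟨a, ha, hva⟩ : ∃ a : K, a ≠ 0 ∧ v = a • b i0 := ⟨_, hvi0, expand v i0 hvrest⟩
    have : b i0 = a⁻¹ • v := by rw [hva, smul_smul, inv_mul_cancel₀ ha, one_smul]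
    rw [this]
    exact Submodule.smul_mem _ _ (Submodule.subset_span (Set.mem_insert _ _))
  have hbw : b j0 ∈ Submodule.span K ({v, w} : Set g) := by
    obtain ⟨a, ha, hwa⟩ : ∃ a : K, a ≠ 0 ∧ w = a • b j0 := ⟨_, hwj0, expand w j0 hwrest⟩
    have : b j0 = a⁻¹ • w := by rw [hwa, smul_smul, inv_mul_cancel₀ ha, one_smul]
    rw [this]
    exact Submodule.smul_mem _ _ (Submodule.subset_span (Set.mem_insert_of_mem _ rfl))
  refine Submodule.span_le.2 ?_ humem
  rintro x ⟨i, hi, rfl⟩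
  rcases hi with rfl | rfl
  · exact hbv
  · exact hbw
end

section
/- Let g be a Lie algebra over a field K with a basis η₁,…,ηₙ such that for every pair i ≠ j there exist constants α, β ∈ K with [ηᵢ, ηⱼ] = α·ηᵢ + β·ηⱼ. Then for any pairwise distinct scalars λ₁,…,λₙ ∈ K, the linear operator L defined by L ηᵢ = λᵢ ηᵢ is an algebraic Nijenhuis operator, i.e. L[Lx,y] + L[x,Ly] - [Lx,Ly] - L²[x,y] = 0 for all x, y ∈ g. -/
/-- If a Lie algebra has a basis `η` such that any two basis vectors span a two-dimensional
subalgebra, then any diagonal operator `L η i = λ i • η i` with pairwise distinct eigenvalues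
is an algebraic Nijenhuis operator. -/
theorem diagonal_is_nijenhuis
    {K : Type*} [Field K] {g : Type*} [LieRing g] [LieAlgebra K g]
    {n : ℕ}
    (η : Module.Basis (Fin n) K g)
    (hbasis : ∀ i j : Fin n, i ≠ j →
      ∃ α β : K, ⁅η i, η j⁆ = α • η i + β • η j)
    (lam : Fin n → K) (hlam : Function.Injective lam)
    (L : Module.End K g) (hL : ∀ i, L (η i) = lam i • η i) :
    ∀ x y : g, L ⁅L x, y⁆ + L ⁅x, L y⁆ - ⁅L x, L y⁆ - L (L ⁅x, y⁆) = 0 := by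
  set B : g →ₗ[K] g →ₗ[K] g := LinearMap.mk₂ K
      (fun x y => L ⁅L x, y⁆ + L ⁅x, L y⁆ - ⁅L x, L y⁆ - L (L ⁅x, y⁆))
      (by intro x x' y; simp [add_lie, lie_add, map_add]; abel)
      (by intro c x y; simp [smul_lie, lie_smul, map_smul, smul_add, smul_sub])
      (by intro x y y'; simp [add_lie, lie_add, map_add]; abel)
      (by intro c x y; simp [smul_lie, lie_smul, map_smul, smul_add, smul_sub])
    with hB
  have key : B = 0 := by
    apply LinearMap.ext_basis η η
    intro i j
    rcases eq_or_ne i j with rfl | hij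
    · simp [hB, hL, lie_smul, smul_lie, lie_self]
    · obtain ⟨α, β, h⟩ := hbasis i j hij
      simp only [hB, LinearMap.mk₂_apply, hL, smul_lie, lie_smul, h, map_add, map_smul,
        LinearMap.zero_apply, smul_add, smul_smul]
      module
  intro x y
  simpa [hB] using LinearMap.congr_fun (LinearMap.congr_fun key x) y
end

section
/- Let g be the 3-dimensional Lie algebra over ℝ with basis η₁,η₂,η₃ and brackets [η₁,η₂] = -η₃, [η₂,η₃] = η₁, [η₃,η₁] = η₂ (the algebra a_{3,4} ≅ sl(2,ℝ)). Then the vectors ζ₁ = -η₁+η₂+η₃, ζ₂ = η₁+η₂-η₃, ζ₃ = 2η₁ form a basis of g satisfying [ζ₁,ζ₂] = ζ₁ - ζ₂, [ζ₂,ζ₃] = ζ₃ - 2ζ₂, [ζ₃,ζ₁] = -2ζ₁ - ζ₃; in particular every pair ζᵢ, ζⱼ spans a two-dimensional subalgebra. -/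
/-- In the real Lie algebra `a_{3,4} ≅ sl(2,ℝ)` with brackets `[η₁,η₂] = -η₃`,
`[η₂,η₃] = η₁`, `[η₃,η₁] = η₂`, the vectors `ζ₁ = -η₁+η₂+η₃`, `ζ₂ = η₁+η₂-η₃`,
`ζ₃ = 2η₁` form a basis which is a Nijenhuis eigenbasis. -/
theorem a34_nijenhuis_eigenbasis
    {g : Type*} [LieRing g] [LieAlgebra ℝ g]
    (η : Module.Basis (Fin 3) ℝ g)
    (h12 : ⁅η 0, η 1⁆ = -η 2) (h23 : ⁅η 1, η 2⁆ = η 0) (h31 : ⁅η 2, η 0⁆ = η 1) :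
    ∀ ζ : Fin 3 → g,
      ζ = ![-η 0 + η 1 + η 2, η 0 + η 1 - η 2, (2 : ℝ) • η 0] →
      LinearIndependent ℝ ζ ∧ Submodule.span ℝ (Set.range ζ) = ⊤ ∧
      ⁅ζ 0, ζ 1⁆ = ζ 0 - ζ 1 ∧
      ⁅ζ 1, ζ 2⁆ = ζ 2 - (2 : ℝ) • ζ 1 ∧
      ⁅ζ 2, ζ 0⁆ = -(2 : ℝ) • ζ 0 - ζ 2 ∧
      ∀ i j : Fin 3, ⁅ζ i, ζ j⁆ ∈ Submodule.span ℝ ({ζ i, ζ j} : Set g) := by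
  intro ζ hζ
  have h21 : ⁅η 1, η 0⁆ = η 2 := by rw [← lie_skew, h12, neg_neg]
  have h32 : ⁅η 2, η 1⁆ = -η 0 := by rw [← lie_skew, h23]
  have h13 : ⁅η 0, η 2⁆ = -η 1 := by rw [← lie_skew, h31]
  have hz0 : ζ 0 = -η 0 + η 1 + η 2 := by rw [hζ]; rfl
  have hz1 : ζ 1 = η 0 + η 1 - η 2 := by rw [hζ]; rfl
  have hz2 : ζ 2 = (2 : ℝ) • η 0 := by rw [hζ]; rfl
  have b01 : ⁅ζ 0, ζ 1⁆ = ζ 0 - ζ 1 := by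
    simp only [hz0, hz1, hz2, add_lie, sub_lie, neg_lie, lie_add, lie_sub, lie_neg,
      smul_lie, lie_smul, lie_self, h12, h21, h23, h32, h31, h13]
    module
  have b12 : ⁅ζ 1, ζ 2⁆ = ζ 2 - (2 : ℝ) • ζ 1 := by
    simp only [hz0, hz1, hz2, add_lie, sub_lie, neg_lie, lie_add, lie_sub, lie_neg,
      smul_lie, lie_smul, lie_self, h12, h21, h23, h32, h31, h13]
    module
  have b20 : ⁅ζ 2, ζ 0⁆ = -(2 : ℝ) • ζ 0 - ζ 2 := by
    simp only [hz0, hz1, hz2, add_lie, sub_lie, neg_lie, lie_add, lie_sub, lie_neg,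
      smul_lie, lie_smul, lie_self, h12, h21, h23, h32, h31, h13]
    module
  have hspan : Submodule.span ℝ (Set.range ζ) = ⊤ := by
    rw [eq_top_iff, ← η.span_eq]
    refine Submodule.span_le.2 ?_
    rintro x ⟨i, rfl⟩
    have m0 : ζ 0 ∈ Submodule.span ℝ (Set.range ζ) := Submodule.subset_span ⟨0, rfl⟩
    have m1 : ζ 1 ∈ Submodule.span ℝ (Set.range ζ) := Submodule.subset_span ⟨1, rfl⟩
    have m2 : ζ 2 ∈ Submodule.span ℝ (Set.range ζ) := Submodule.subset_span ⟨2, rfl⟩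
    have e0 : η 0 = (2 : ℝ)⁻¹ • ζ 2 := by rw [hz2]; module
    have e1 : η 1 = (2 : ℝ)⁻¹ • (ζ 0 + ζ 1) := by rw [hz0, hz1]; module
    have e2 : η 2 = (2 : ℝ)⁻¹ • (ζ 0 - ζ 1 + ζ 2) := by rw [hz0, hz1, hz2]; module
    fin_cases i
    · exact e0 ▸ Submodule.smul_mem _ _ m2
    · exact e1 ▸ Submodule.smul_mem _ _ (Submodule.add_mem _ m0 m1)
    · exact e2 ▸ Submodule.smul_mem _ _
        (Submodule.add_mem _ (Submodule.sub_mem _ m0 m1) m2)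
  have hli : LinearIndependent ℝ ζ := by
    refine linearIndependent_of_top_le_span_of_card_eq_finrank hspan.ge ?_
    rw [Module.finrank_eq_card_basis η]
  refine ⟨hli, hspan, b01, b12, b20, ?_⟩
  intro i j
  have mem1 : ∀ a b : g, a ∈ Submodule.span ℝ ({a, b} : Set g) := fun a b =>
    Submodule.subset_span (Set.mem_insert _ _)
  have mem2 : ∀ a b : g, b ∈ Submodule.span ℝ ({a, b} : Set g) := fun a b =>
    Submodule.subset_span (Set.mem_insert_of_mem _ rfl)
  have b10 : ⁅ζ 1, ζ 0⁆ = ζ 1 - ζ 0 := by rw [← lie_skew, b01]; abel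
  have b21 : ⁅ζ 2, ζ 1⁆ = (2:ℝ) • ζ 1 - ζ 2 := by rw [← lie_skew, b12]; abel
  have b02 : ⁅ζ 0, ζ 2⁆ = ζ 2 + (2:ℝ) • ζ 0 := by
    rw [← lie_skew, b20]; module
  fin_cases i <;> fin_cases j
  · show (⁅ζ 0, ζ 0⁆ : g) ∈ Submodule.span ℝ ({ζ 0, ζ 0} : Set g)
    rw [lie_self]; exact Submodule.zero_mem _
  · show (⁅ζ 0, ζ 1⁆ : g) ∈ Submodule.span ℝ ({ζ 0, ζ 1} : Set g)
    rw [b01]; exact Submodule.sub_mem _ (mem1 _ _) (mem2 _ _)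
  · show (⁅ζ 0, ζ 2⁆ : g) ∈ Submodule.span ℝ ({ζ 0, ζ 2} : Set g)
    rw [b02]; exact Submodule.add_mem _ (mem2 _ _) (Submodule.smul_mem _ _ (mem1 _ _))
  · show (⁅ζ 1, ζ 0⁆ : g) ∈ Submodule.span ℝ ({ζ 1, ζ 0} : Set g)
    rw [b10]; exact Submodule.sub_mem _ (mem1 _ _) (mem2 _ _)
  · show (⁅ζ 1, ζ 1⁆ : g) ∈ Submodule.span ℝ ({ζ 1, ζ 1} : Set g)
    rw [lie_self]; exact Submodule.zero_mem _
  · show (⁅ζ 1, ζ 2⁆ : g) ∈ Submodule.span ℝ ({ζ 1, ζ 2} : Set g)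
    rw [b12]; exact Submodule.sub_mem _ (mem2 _ _) (Submodule.smul_mem _ _ (mem1 _ _))
  · show (⁅ζ 2, ζ 0⁆ : g) ∈ Submodule.span ℝ ({ζ 2, ζ 0} : Set g)
    rw [b20]
    exact Submodule.sub_mem _ (Submodule.smul_mem _ _ (mem2 _ _)) (mem1 _ _)
  · show (⁅ζ 2, ζ 1⁆ : g) ∈ Submodule.span ℝ ({ζ 2, ζ 1} : Set g)
    rw [b21]; exact Submodule.sub_mem _ (Submodule.smul_mem _ _ (mem2 _ _)) (mem1 _ _)
  · show (⁅ζ 2, ζ 2⁆ : g) ∈ Submodule.span ℝ ({ζ 2, ζ 2} : Set g)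
    rw [lie_self]; exact Submodule.zero_mem _
end

section
/- Let g be the 3-dimensional real Lie algebra with basis η₁,η₂,η₃ and nonzero brackets [η₁,η₂] = η₂, [η₃,η₁] = -η₃ (the algebra a_{3,5}). Then for any two vectors α, β ∈ g, the bracket [α,β] lies in the span of α and β; consequently every basis of g is a Nijenhuis eigenbasis. -/
/-- In the real Lie algebra `a_{3,5}` with brackets `[η₁,η₂] = η₂`, `[η₂,η₃] = 0`,
`[η₃,η₁] = -η₃`, the bracket of any two vectors lies in their span; consequently every
basis is a Nijenhuis eigenbasis. -/
theorem a35_every_basis_nijenhuis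
    {g : Type*} [LieRing g] [LieAlgebra ℝ g]
    (η : Module.Basis (Fin 3) ℝ g)
    (h12 : ⁅η 0, η 1⁆ = η 1) (h23 : ⁅η 1, η 2⁆ = 0) (h31 : ⁅η 2, η 0⁆ = -η 2) :
    (∀ α β : g, ⁅α, β⁆ ∈ Submodule.span ℝ ({α, β} : Set g)) ∧
    ∀ ζ : Module.Basis (Fin 3) ℝ g, ∀ i j : Fin 3,
      ⁅ζ i, ζ j⁆ ∈ Submodule.span ℝ ({ζ i, ζ j} : Set g) := by
  have h02 : ⁅η 0, η 2⁆ = η 2 := by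
    rw [← lie_skew, h31, neg_neg]
  have h10 : ⁅η 1, η 0⁆ = -η 1 := by
    rw [← lie_skew, h12]
  have h21 : ⁅η 2, η 1⁆ = 0 := by
    rw [← lie_skew, h23, neg_zero]
  have key : ∀ α β : g, ⁅α, β⁆ = (η.repr α 0) • β - (η.repr β 0) • α := by
    intro α β
    have hα := η.sum_repr α
    have hβ := η.sum_repr β
    rw [Fin.sum_univ_three] at hα hβ
    set a0 := η.repr α 0 with ha0
    set a1 := η.repr α 1 with ha1
    set a2 := η.repr α 2 with ha2
    set b0 := η.repr β 0 with hb0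
    set b1 := η.repr β 1 with hb1
    set b2 := η.repr β 2 with hb2
    rw [← hα, ← hβ]
    simp only [add_lie, lie_add, smul_lie, lie_smul, h12, h23, h31, h02, h10, h21,
      lie_self, smul_zero, smul_neg, smul_smul]
    module
  constructor
  · intro α β
    rw [key α β]
    exact sub_mem
      (Submodule.smul_mem _ _ (Submodule.subset_span (by simp)))
      (Submodule.smul_mem _ _ (Submodule.subset_span (by simp)))
  · intro ζ i j
    rw [key (ζ i) (ζ j)]
    exact sub_mem
      (Submodule.smul_mem _ _ (Submodule.subset_span (by simp)))
      (Submodule.smul_mem _ _ (Submodule.subset_span (by simp)))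
end

section
/- Let b ∈ ℝ and let g be the 3-dimensional real Lie algebra with basis η₁,η₂,η₃ and brackets [η₁,η₂] = b·η₂ - η₃, [η₃,η₁] = η₂ - b·η₃, [η₂,η₃] = 0 (the algebra a_{3,8}). Then the vectors ζ₁ = η₁+η₃, ζ₂ = η₁+η₂, ζ₃ = η₂+η₃ form a basis with [ζ₁,ζ₂] = (1+b)(ζ₂-ζ₁), [ζ₂,ζ₃] = (b-1)ζ₃, [ζ₃,ζ₁] = (1-b)ζ₃, so each pair of these vectors spans a two-dimensional subalgebra. -/
/-- In the real Lie algebra `a_{3,8}` with brackets `[η₁,η₂] = b·η₂ - η₃`,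
`[η₃,η₁] = η₂ - b·η₃`, `[η₂,η₃] = 0`, the vectors `ζ₁ = η₁+η₃`, `ζ₂ = η₁+η₂`,
`ζ₃ = η₂+η₃` form a Nijenhuis eigenbasis. -/
theorem a38_nijenhuis_eigenbasis
    {g : Type*} [LieRing g] [LieAlgebra ℝ g] (b : ℝ)
    (η : Module.Basis (Fin 3) ℝ g)
    (h12 : ⁅η 0, η 1⁆ = b • η 1 - η 2) (h31 : ⁅η 2, η 0⁆ = η 1 - b • η 2)
    (h23 : ⁅η 1, η 2⁆ = 0) :
    ∀ ζ : Fin 3 → g,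
      ζ = ![η 0 + η 2, η 0 + η 1, η 1 + η 2] →
      LinearIndependent ℝ ζ ∧ Submodule.span ℝ (Set.range ζ) = ⊤ ∧
      ⁅ζ 0, ζ 1⁆ = (1 + b) • (ζ 1 - ζ 0) ∧
      ⁅ζ 1, ζ 2⁆ = (b - 1) • ζ 2 ∧
      ⁅ζ 2, ζ 0⁆ = (1 - b) • ζ 2 ∧
      ∀ i j : Fin 3, ⁅ζ i, ζ j⁆ ∈ Submodule.span ℝ ({ζ i, ζ j} : Set g) := by
  intro ζ hζ
  have hζ0 : ζ 0 = η 0 + η 2 := by rw [hζ]; rfl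
  have hζ1 : ζ 1 = η 0 + η 1 := by rw [hζ]; rfl
  have hζ2 : ζ 2 = η 1 + η 2 := by rw [hζ]; rfl
  have h21 : ⁅η 2, η 1⁆ = 0 := by rw [← lie_skew, h23, neg_zero]
  have h10 : ⁅η 1, η 0⁆ = -(b • η 1 - η 2) := by rw [← lie_skew, h12]
  have h20 : ⁅η 2, η 0⁆ = η 1 - b • η 2 := h31
  have h02 : ⁅η 0, η 2⁆ = -(η 1 - b • η 2) := by rw [← lie_skew, h31]
  have B01 : ⁅ζ 0, ζ 1⁆ = (1 + b) • (ζ 1 - ζ 0) := by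
    rw [hζ0, hζ1]
    simp only [lie_add, add_lie, h12, h20, h21, lie_self]
    module
  have B12 : ⁅ζ 1, ζ 2⁆ = (b - 1) • ζ 2 := by
    rw [hζ1, hζ2]
    simp only [lie_add, add_lie, h12, h02, h23, lie_self]
    module
  have B20 : ⁅ζ 2, ζ 0⁆ = (1 - b) • ζ 2 := by
    rw [hζ2, hζ0]
    simp only [lie_add, add_lie, h10, h20, h23, lie_self]
    module
  have hli : LinearIndependent ℝ ζ := by
    rw [Fintype.linearIndependent_iff]
    intro c hc
    have hη := η.linearIndependent
    rw [Fintype.linearIndependent_iff] at hη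
    have hsum : ∑ i, c i • ζ i =
        ∑ i, (![c 0 + c 1, c 1 + c 2, c 0 + c 2] : Fin 3 → ℝ) i • η i := by
      simp only [Fin.sum_univ_three, hζ0, hζ1, hζ2]
      simp only [Matrix.cons_val_zero, Matrix.cons_val_one, Matrix.head_cons,
        Matrix.cons_val_two, Matrix.tail_cons]
      module
    have := hη _ (by rw [← hsum, hc])
    have e0 := this 0
    have e1 := this 1
    have e2 := this 2
    simp only [Matrix.cons_val_zero, Matrix.cons_val_one, Matrix.head_cons,
      Matrix.cons_val_two, Matrix.tail_cons] at e0 e1 e2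
    intro i
    fin_cases i <;> simp <;> linarith
  have hspan : Submodule.span ℝ (Set.range ζ) = ⊤ := by
    rw [eq_top_iff, ← η.span_eq]
    refine Submodule.span_le.2 ?_
    rintro x ⟨i, rfl⟩
    have m0 : ζ 0 ∈ Submodule.span ℝ (Set.range ζ) :=
      Submodule.subset_span ⟨0, rfl⟩
    have m1 : ζ 1 ∈ Submodule.span ℝ (Set.range ζ) :=
      Submodule.subset_span ⟨1, rfl⟩
    have m2 : ζ 2 ∈ Submodule.span ℝ (Set.range ζ) :=
      Submodule.subset_span ⟨2, rfl⟩
    fin_cases i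
    · show η 0 ∈ (Submodule.span ℝ (Set.range ζ) : Set g)
      have : η 0 = (1/2 : ℝ) • ζ 0 + (1/2 : ℝ) • ζ 1 - (1/2 : ℝ) • ζ 2 := by
        rw [hζ0, hζ1, hζ2]; module
      rw [this]
      exact Submodule.sub_mem _ (Submodule.add_mem _ (Submodule.smul_mem _ _ m0)
        (Submodule.smul_mem _ _ m1)) (Submodule.smul_mem _ _ m2)
    · show η 1 ∈ (Submodule.span ℝ (Set.range ζ) : Set g)
      have : η 1 = (1/2 : ℝ) • ζ 1 + (1/2 : ℝ) • ζ 2 - (1/2 : ℝ) • ζ 0 := by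
        rw [hζ0, hζ1, hζ2]; module
      rw [this]
      exact Submodule.sub_mem _ (Submodule.add_mem _ (Submodule.smul_mem _ _ m1)
        (Submodule.smul_mem _ _ m2)) (Submodule.smul_mem _ _ m0)
    · show η 2 ∈ (Submodule.span ℝ (Set.range ζ) : Set g)
      have : η 2 = (1/2 : ℝ) • ζ 0 + (1/2 : ℝ) • ζ 2 - (1/2 : ℝ) • ζ 1 := by
        rw [hζ0, hζ1, hζ2]; module
      rw [this]
      exact Submodule.sub_mem _ (Submodule.add_mem _ (Submodule.smul_mem _ _ m0)
        (Submodule.smul_mem _ _ m2)) (Submodule.smul_mem _ _ m1)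
  refine ⟨hli, hspan, B01, B12, B20, ?_⟩
  intro i j
  have mem : ∀ i j : Fin 3, ζ i ∈ Submodule.span ℝ ({ζ i, ζ j} : Set g) :=
    fun i j => Submodule.subset_span (Set.mem_insert _ _)
  have mem' : ∀ i j : Fin 3, ζ j ∈ Submodule.span ℝ ({ζ i, ζ j} : Set g) :=
    fun i j => Submodule.subset_span (Set.mem_insert_of_mem _ rfl)
  have B10 : ⁅ζ 1, ζ 0⁆ = -((1 + b) • (ζ 1 - ζ 0)) := by rw [← lie_skew, B01]
  have B21 : ⁅ζ 2, ζ 1⁆ = -((b - 1) • ζ 2) := by rw [← lie_skew, B12]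
  have B02 : ⁅ζ 0, ζ 2⁆ = -((1 - b) • ζ 2) := by rw [← lie_skew, B20]
  fin_cases i <;> fin_cases j
  · simp
  · show ⁅ζ 0, ζ 1⁆ ∈ Submodule.span ℝ ({ζ 0, ζ 1} : Set g)
    rw [B01]
    exact Submodule.smul_mem _ _ (Submodule.sub_mem _ (mem' 0 1) (mem 0 1))
  · show ⁅ζ 0, ζ 2⁆ ∈ Submodule.span ℝ ({ζ 0, ζ 2} : Set g)
    rw [B02]
    exact Submodule.neg_mem _ (Submodule.smul_mem _ _ (mem' 0 2))
  · show ⁅ζ 1, ζ 0⁆ ∈ Submodule.span ℝ ({ζ 1, ζ 0} : Set g)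
    rw [B10]
    exact Submodule.neg_mem _
      (Submodule.smul_mem _ _ (Submodule.sub_mem _ (mem 1 0) (mem' 1 0)))
  · simp
  · show ⁅ζ 1, ζ 2⁆ ∈ Submodule.span ℝ ({ζ 1, ζ 2} : Set g)
    rw [B12]
    exact Submodule.smul_mem _ _ (mem' 1 2)
  · show ⁅ζ 2, ζ 0⁆ ∈ Submodule.span ℝ ({ζ 2, ζ 0} : Set g)
    rw [B20]
    exact Submodule.smul_mem _ _ (mem 2 0)
  · show ⁅ζ 2, ζ 1⁆ ∈ Submodule.span ℝ ({ζ 2, ζ 1} : Set g)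
    rw [B21]
    exact Submodule.neg_mem _ (Submodule.smul_mem _ _ (mem 2 1))
  · simp
end

section
/- The 3-dimensional Heisenberg Lie algebra over ℝ (basis η₁,η₂,η₃ with the single nonzero bracket [η₂,η₃] = η₁) does not admit a basis ζ₁,ζ₂,ζ₃ in which every pair of basis vectors spans a two-dimensional Lie subalgebra. Equivalently, it admits no regular semisimple algebraic Nijenhuis operator. -/
/-- The 3-dimensional real Heisenberg Lie algebra admits no Nijenhuis eigenbasis,
equivalently no regular semisimple algebraic Nijenhuis operator. -/
theorem heisenberg_no_nijenhuis_eigenbasis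
    {g : Type*} [LieRing g] [LieAlgebra ℝ g]
    (η : Module.Basis (Fin 3) ℝ g)
    (h23 : ⁅η 1, η 2⁆ = η 0) (h12 : ⁅η 0, η 1⁆ = 0) (h31 : ⁅η 2, η 0⁆ = 0) :
    (¬ ∃ ζ : Module.Basis (Fin 3) ℝ g, ∀ i j : Fin 3,
        ⁅ζ i, ζ j⁆ ∈ Submodule.span ℝ ({ζ i, ζ j} : Set g)) ∧
    (¬ ∃ L : Module.End ℝ g,
        (∀ x y : g, L ⁅L x, y⁆ + L ⁅x, L y⁆ - ⁅L x, L y⁆ - L (L ⁅x, y⁆) = 0) ∧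
        ∃ (b : Module.Basis (Fin 3) ℝ g) (ev : Fin 3 → ℝ), Function.Injective ev ∧
          ∀ i, L (b i) = ev i • b i) := by
  have h32 : ⁅η 2, η 1⁆ = -η 0 := by rw [← lie_skew, h23]
  have h21 : ⁅η 1, η 0⁆ = 0 := by rw [← lie_skew, h12, neg_zero]
  have h02 : ⁅η 0, η 2⁆ = 0 := by rw [← lie_skew, h31, neg_zero]
  -- the explicit bracket formula
  have key : ∀ x y : g,
      ⁅x, y⁆ = (η.repr x 1 * η.repr y 2 - η.repr x 2 * η.repr y 1) • η 0 := by
    intro x y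
    conv_lhs => rw [← η.sum_repr x, ← η.sum_repr y]
    simp only [Fin.sum_univ_three, add_lie, lie_add, smul_lie, lie_smul, h23, h12, h31,
      h32, h21, h02, lie_self, smul_zero, zero_add, add_zero, smul_smul, smul_neg]
    module
  -- η 0 is central
  have c0 : ∀ x : g, ⁅x, η 0⁆ = 0 := by
    intro x
    rw [key]
    simp [Module.Basis.repr_self, Finsupp.single_apply]
  have hcent : ∀ x y z : g, ⁅z, ⁅x, y⁆⁆ = 0 := by
    intro x y z
    rw [key x y, lie_smul, c0, smul_zero]
  -- `η 0 ≠ 0`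
  have hη0 : (η 0 : g) ≠ 0 := η.ne_zero 0
  -- Part 1
  have part1 : ¬ ∃ ζ : Module.Basis (Fin 3) ℝ g, ∀ i j : Fin 3,
      ⁅ζ i, ζ j⁆ ∈ Submodule.span ℝ ({ζ i, ζ j} : Set g) := by
    rintro ⟨ζ, hζ⟩
    have hz : ∀ i j : Fin 3, ⁅ζ i, ζ j⁆ = 0 := by
      intro i j
      by_contra hne
      obtain ⟨a, b, hab⟩ := Submodule.mem_span_pair.mp (hζ i j)
      have ha : a • ⁅ζ i, ζ j⁆ = 0 := by
        have h0 : ⁅ζ j, ⁅ζ i, ζ j⁆⁆ = 0 := hcent _ _ _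
        rw [← hab, lie_add, lie_smul, lie_smul, lie_self, smul_zero, add_zero,
          ← lie_skew, smul_neg, neg_eq_zero] at h0
        exact h0
      have hb : b • ⁅ζ i, ζ j⁆ = 0 := by
        have h0 : ⁅ζ i, ⁅ζ i, ζ j⁆⁆ = 0 := hcent _ _ _
        rw [← hab, lie_add, lie_smul, lie_smul, lie_self, smul_zero, zero_add] at h0
        exact h0
      rcases smul_eq_zero.mp ha with ha0 | h
      · rcases smul_eq_zero.mp hb with hb0 | h
        · exact hne (by rw [← hab, ha0, hb0, zero_smul, zero_smul, add_zero])
        · exact hne h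
      · exact hne h
    have habel : ∀ x y : g, ⁅x, y⁆ = 0 := by
      intro x y
      conv_lhs => rw [← ζ.sum_repr x, ← ζ.sum_repr y]
      simp only [Fin.sum_univ_three, add_lie, lie_add, smul_lie, lie_smul, hz, smul_zero, add_zero]
    exact hη0 (h23 ▸ habel (η 1) (η 2))
  refine ⟨part1, ?_⟩
  -- Part 2
  rintro ⟨L, hL, b, ev, hinj, heig⟩
  apply part1
  refine ⟨b, fun i j => ?_⟩
  rcases eq_or_ne i j with rfl | hij
  · simp [lie_self, Submodule.zero_mem]
  -- repr of L
  have hLrepr : ∀ (v : g) (k : Fin 3), b.repr (L v) k = ev k * b.repr v k := by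
    intro v k
    have hv : L v = ∑ m, (ev m * b.repr v m) • b m := by
      conv_lhs => rw [← b.sum_repr v]
      rw [map_sum]
      simp [heig, smul_smul, mul_comm]
    rw [hv, b.repr_sum_self]
  have e0 := hL (b i) (b j)
  rw [heig i, heig j, smul_lie, lie_smul, lie_smul, smul_lie, map_smul, map_smul,
    smul_smul] at e0
  have ck0 : ∀ k : Fin 3, k ≠ i → k ≠ j → b.repr ⁅b i, b j⁆ k = 0 := by
    intro k hki hkj
    have ec := congrArg (fun v => b.repr v k) e0
    simp only [map_add, map_sub, map_smul, Finsupp.coe_add, Finsupp.coe_sub,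
      Finsupp.coe_smul, Pi.add_apply, Pi.sub_apply, Pi.smul_apply, smul_eq_mul,
      hLrepr, map_zero, Finsupp.coe_zero, Pi.zero_apply] at ec
    have hfi : ev k - ev i ≠ 0 := sub_ne_zero.mpr fun h => hki (hinj h)
    have hfj : ev k - ev j ≠ 0 := sub_ne_zero.mpr fun h => hkj (hinj h)
    have hfac : (ev k - ev i) * ((ev k - ev j) * b.repr ⁅b i, b j⁆ k) = 0 := by
      linear_combination -ec
    rcases mul_eq_zero.mp hfac with h | h
    · exact absurd h hfi
    · rcases mul_eq_zero.mp h with h | h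
      · exact absurd h hfj
      · exact h
  rw [show (⁅b i, b j⁆ : g) = ∑ k, b.repr ⁅b i, b j⁆ k • b k from (b.sum_repr _).symm]
  refine Submodule.sum_mem _ fun k _ => ?_
  rcases eq_or_ne k i with rfl | hki
  · exact Submodule.smul_mem _ _ (Submodule.subset_span (by simp))
  rcases eq_or_ne k j with rfl | hkj
  · exact Submodule.smul_mem _ _ (Submodule.subset_span (by simp))
  · rw [ck0 k hki hkj, zero_smul]; exact Submodule.zero_mem _
end

section
/- The Lie algebra so(3,ℝ) (basis η₁,η₂,η₃ with [η₁,η₂]=η₃, [η₂,η₃]=η₁, [η₃,η₁]=η₂) does not admit a basis in which every pair of basis vectors spans a two-dimensional Lie subalgebra. -/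
/-- The Lie algebra `so(3,ℝ)` admits no basis in which every pair of basis vectors spans
a two-dimensional Lie subalgebra. -/
theorem so3_no_nijenhuis_eigenbasis
    {g : Type*} [LieRing g] [LieAlgebra ℝ g]
    (η : Module.Basis (Fin 3) ℝ g)
    (h12 : ⁅η 0, η 1⁆ = η 2) (h23 : ⁅η 1, η 2⁆ = η 0) (h31 : ⁅η 2, η 0⁆ = η 1) :
    ¬ ∃ ζ : Module.Basis (Fin 3) ℝ g, ∀ i j : Fin 3,
      ⁅ζ i, ζ j⁆ ∈ Submodule.span ℝ ({ζ i, ζ j} : Set g) := by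
  rintro ⟨ζ, hζ⟩
  have h21 : ⁅η 1, η 0⁆ = -η 2 := by rw [← lie_skew, h12]
  have h32 : ⁅η 2, η 1⁆ = -η 0 := by rw [← lie_skew, h23]
  have h13 : ⁅η 0, η 2⁆ = -η 1 := by rw [← lie_skew, h31]
  have key : ∀ x y : g, ⁅x, y⁆ =
      (η.repr x 1 * η.repr y 2 - η.repr x 2 * η.repr y 1) • η 0 +
      (η.repr x 2 * η.repr y 0 - η.repr x 0 * η.repr y 2) • η 1 +
      (η.repr x 0 * η.repr y 1 - η.repr x 1 * η.repr y 0) • η 2 := by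
    intro x y
    conv_lhs => rw [← η.sum_repr x, ← η.sum_repr y]
    simp only [Fin.sum_univ_three, add_lie, lie_add, smul_lie, lie_smul, lie_self,
      h12, h23, h31, h21, h32, h13, smul_neg, smul_zero, smul_smul]
    module
  have orth1 : ∀ x y : g,
      η.repr ⁅x, y⁆ 0 * η.repr x 0 + η.repr ⁅x, y⁆ 1 * η.repr x 1 +
        η.repr ⁅x, y⁆ 2 * η.repr x 2 = 0 := by
    intro x y
    rw [key x y]
    simp [map_add, map_smul, Module.Basis.repr_self, Finsupp.single_apply]
    ring
  have orth2 : ∀ x y : g,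
      η.repr ⁅x, y⁆ 0 * η.repr y 0 + η.repr ⁅x, y⁆ 1 * η.repr y 1 +
        η.repr ⁅x, y⁆ 2 * η.repr y 2 = 0 := by
    intro x y
    rw [key x y]
    simp [map_add, map_smul, Module.Basis.repr_self, Finsupp.single_apply]
    ring
  have hzero : ∀ i j : Fin 3, ⁅ζ i, ζ j⁆ = 0 := by
    intro i j
    obtain ⟨a, b, hab⟩ := Submodule.mem_span_pair.mp (hζ i j)
    set v := ⁅ζ i, ζ j⁆ with hv
    have e : ∀ k, η.repr v k = a * η.repr (ζ i) k + b * η.repr (ζ j) k := by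
      intro k; rw [← hab]; simp
    have h1 := orth1 (ζ i) (ζ j)
    have h2 := orth2 (ζ i) (ζ j)
    rw [← hv] at h1 h2
    have hsq : η.repr v 0 ^ 2 + η.repr v 1 ^ 2 + η.repr v 2 ^ 2 = 0 := by
      linear_combination a * h1 + b * h2 + η.repr v 0 * (e 0) + η.repr v 1 * (e 1) +
        η.repr v 2 * (e 2)
    have hrepr : η.repr v = 0 := by
      ext k
      fin_cases k
      · have : η.repr v 0 = 0 := by
          nlinarith [sq_nonneg (η.repr v 0), sq_nonneg (η.repr v 1), sq_nonneg (η.repr v 2)]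
        simpa using this
      · have : η.repr v 1 = 0 := by
          nlinarith [sq_nonneg (η.repr v 0), sq_nonneg (η.repr v 1), sq_nonneg (η.repr v 2)]
        simpa using this
      · have : η.repr v 2 = 0 := by
          nlinarith [sq_nonneg (η.repr v 0), sq_nonneg (η.repr v 1), sq_nonneg (η.repr v 2)]
        simpa using this
    exact (LinearEquiv.map_eq_zero_iff η.repr).mp hrepr
  have hbr : ⁅η 0, η 1⁆ = 0 := by
    conv_lhs => rw [← ζ.sum_repr (η 0), ← ζ.sum_repr (η 1)]
    simp only [Fin.sum_univ_three, add_lie, lie_add, smul_lie, lie_smul, hzero,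
      smul_zero, add_zero, zero_add]
  exact η.ne_zero 2 (by rw [← h12, hbr])
end

section
/- Let g be a 3-dimensional Lie algebra over a field K with basis η₁,η₂,η₃ and structure constants cᵏᵢⱼ (so [ηᵢ,ηⱼ] = Σₖ cᵏᵢⱼ ηₖ). For linearly independent α = Σaⁱηᵢ and β = Σbⁱηᵢ set M₁ = a²b³-a³b², M₂ = a³b¹-a¹b³, M₃ = a¹b²-a²b¹. Then span{α,β} is a Lie subalgebra if and only if M₁²c¹₂₃ + M₂²c²₃₁ + M₃²c³₁₂ + M₁M₂(c¹₃₁+c²₂₃) + M₂M₃(c²₁₂+c³₃₁) + M₁M₃(c¹₁₂+c³₂₃) = 0. -/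
/-- In a 3-dimensional Lie algebra with basis `η` and structure constants `c k i j`
(so `[ηᵢ,ηⱼ] = Σₖ c k i j • ηₖ`), for linearly independent `α, β` with cross product of
coordinates `M`, the span of `α, β` is a subalgebra iff the quadratic expression in `M`
given by the structure constants vanishes. -/
theorem subalgebra_iff_quadric
    {K : Type*} [Field K] {g : Type*} [LieRing g] [LieAlgebra K g]
    (η : Module.Basis (Fin 3) K g) (c : Fin 3 → Fin 3 → Fin 3 → K)
    (hc : ∀ i j : Fin 3, ⁅η i, η j⁆ = ∑ k : Fin 3, c k i j • η k)
    (α β : g) (hind : LinearIndependent K ![α, β])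
    (a b : Fin 3 → K) (ha : a = fun i => η.repr α i) (hb : b = fun i => η.repr β i)
    (M : Fin 3 → K)
    (hM : M = ![a 1 * b 2 - a 2 * b 1, a 2 * b 0 - a 0 * b 2, a 0 * b 1 - a 1 * b 0]) :
    ⁅α, β⁆ ∈ Submodule.span K ({α, β} : Set g) ↔
      M 0 ^ 2 * c 0 1 2 + M 1 ^ 2 * c 1 2 0 + M 2 ^ 2 * c 2 0 1
        + M 0 * M 1 * (c 0 2 0 + c 1 1 2)
        + M 1 * M 2 * (c 1 0 1 + c 2 2 0)
        + M 0 * M 2 * (c 0 0 1 + c 2 1 2) = 0 := by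
  have hcoef : ∀ (d : Fin 3 → K), ∑ k : Fin 3, d k • η k = 0 → ∀ k, d k = 0 :=
    fun d hd => Fintype.linearIndependent_iff.mp η.linearIndependent d hd
  -- structure constants are antisymmetric
  have hdiag : ∀ k i : Fin 3, c k i i = 0 := by
    intro k i
    refine hcoef (fun l => c l i i) ?_ k
    rw [← hc]; exact lie_self _
  have hskew : ∀ k i j : Fin 3, c k j i = - c k i j := by
    intro k i j
    have h0 : ∑ l : Fin 3, (c l j i + c l i j) • η l = 0 := by
      simp only [add_smul, Finset.sum_add_distrib, ← hc]
      rw [← lie_skew (η i) (η j)]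
      abel
    have h1 := hcoef (fun l => c l j i + c l i j) h0 k
    linear_combination h1
  -- the linear functional with coefficients M
  set φ : g →ₗ[K] K := M 0 • η.coord 0 + M 1 • η.coord 1 + M 2 • η.coord 2 with hφ
  have hφη : ∀ k : Fin 3, φ (η k) = M k := by
    intro k
    fin_cases k <;>
      simp [hφ, Module.Basis.coord_apply, Module.Basis.repr_self, Finsupp.single_apply]
  have hφx : ∀ x : g, φ x = M 0 * η.repr x 0 + M 1 * η.repr x 1 + M 2 * η.repr x 2 := by
    intro x
    simp [hφ, Module.Basis.coord_apply]
  have hφα : φ α = 0 := by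
    rw [hφx, hM]
    simp only [ha, hb, Matrix.cons_val_zero, Matrix.cons_val_one, Matrix.head_cons,
      Matrix.cons_val_two, Matrix.tail_cons]
    ring
  have hφβ : φ β = 0 := by
    rw [hφx, hM]
    simp only [ha, hb, Matrix.cons_val_zero, Matrix.cons_val_one, Matrix.head_cons,
      Matrix.cons_val_two, Matrix.tail_cons]
    ring
  -- M ≠ 0 since α, β are linearly independent
  have hψ : LinearIndependent K ![a, b] := by
    have hinj : Function.Injective
        ((Finsupp.linearEquivFunOnFinite K K (Fin 3)).toLinearMap.comp
          η.repr.toLinearMap) :=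
      (Finsupp.linearEquivFunOnFinite K K (Fin 3)).injective.comp η.repr.injective
    have h := hind.map' _ (LinearMap.ker_eq_bot.mpr hinj)
    have heq : ((Finsupp.linearEquivFunOnFinite K K (Fin 3)).toLinearMap.comp
          η.repr.toLinearMap) ∘ ![α, β] = ![a, b] := by
      funext u
      fin_cases u
      · funext i; simp [ha, Finsupp.linearEquivFunOnFinite]; rfl
      · funext i; simp [hb, Finsupp.linearEquivFunOnFinite]; rfl
    rwa [heq] at h
  have hMne : M ≠ 0 := by
    rw [hM, show (![a 1 * b 2 - a 2 * b 1, a 2 * b 0 - a 0 * b 2,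
        a 0 * b 1 - a 1 * b 0]) = crossProduct a b from rfl]
    exact crossProduct_ne_zero_iff_linearIndependent.mpr hψ
  -- φ is surjective
  have hfin : FiniteDimensional K g := Module.Finite.of_basis η
  have hdim : Module.finrank K g = 3 := by
    rw [Module.finrank_eq_card_basis η]; simp
  have hrange : LinearMap.range φ = ⊤ := by
    obtain ⟨k, hk⟩ := Function.ne_iff.mp hMne
    rw [LinearMap.range_eq_top]
    intro x
    refine ⟨(x / M k) • η k, ?_⟩
    rw [map_smul, hφη k, smul_eq_mul, div_mul_cancel₀]
    exact hk
  have hker : Module.finrank K (LinearMap.ker φ) = 2 := by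
    have h := LinearMap.finrank_range_add_finrank_ker φ
    rw [hrange, hdim] at h
    simp only [finrank_top, Module.finrank_self] at h
    omega
  have hspan : Module.finrank K (Submodule.span K ({α, β} : Set g)) = 2 := by
    have h := finrank_span_eq_card hind
    have hrg : Set.range ![α, β] = ({α, β} : Set g) := by
      ext x
      simp [Fin.exists_fin_two, or_comm]
    rw [hrg] at h
    simpa using h
  have hle : Submodule.span K ({α, β} : Set g) ≤ LinearMap.ker φ := by
    rw [Submodule.span_le]
    rintro x hx
    rcases hx with rfl | rfl
    · exact hφα
    · exact hφβ
  have heq : Submodule.span K ({α, β} : Set g) = LinearMap.ker φ :=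
    Submodule.eq_of_le_of_finrank_le hle (by rw [hker, hspan])
  rw [heq, LinearMap.mem_ker]
  -- compute φ ⁅α, β⁆
  have hαexp : α = ∑ i : Fin 3, a i • η i := by
    rw [ha]; exact (η.sum_repr α).symm
  have hβexp : β = ∑ j : Fin 3, b j • η j := by
    rw [hb]; exact (η.sum_repr β).symm
  have hval : φ ⁅α, β⁆ =
      ∑ i : Fin 3, ∑ j : Fin 3, ∑ k : Fin 3, a i * b j * c k i j * M k := by
    conv_lhs => rw [hαexp, hβexp]
    simp only [Fin.sum_univ_three, add_lie, lie_add, smul_lie, lie_smul, hc,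
      smul_add, smul_smul, map_add, map_smul, hφη, smul_eq_mul]
    ring
  have hq : φ ⁅α, β⁆ =
      M 0 ^ 2 * c 0 1 2 + M 1 ^ 2 * c 1 2 0 + M 2 ^ 2 * c 2 0 1
        + M 0 * M 1 * (c 0 2 0 + c 1 1 2)
        + M 1 * M 2 * (c 1 0 1 + c 2 2 0)
        + M 0 * M 2 * (c 0 0 1 + c 2 1 2) := by
    rw [hval]
    simp only [Fin.sum_univ_three, hdiag,
      show ∀ k : Fin 3, c k 1 0 = -c k 0 1 from fun k => hskew k 0 1,
      show ∀ k : Fin 3, c k 2 0 = -c k 0 2 from fun k => hskew k 0 2,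
      show ∀ k : Fin 3, c k 2 1 = -c k 1 2 from fun k => hskew k 1 2]
    rw [hM]
    simp only [Matrix.cons_val_zero, Matrix.cons_val_one, Matrix.head_cons,
      Matrix.cons_val_two, Matrix.tail_cons]
    ring
  rw [hq]
end

section
/- Let a ∈ ℝ with a ≠ 0 and let g be the real Lie algebra with basis η₁,η₂,η₃ and brackets [η₁,η₂] = a·η₂ + η₃, [η₃,η₁] = η₂ - a·η₃, [η₂,η₃] = 0 (the algebra a_{3,7}). Then g does not admit a basis in which every pair of basis vectors spans a two-dimensional Lie subalgebra. -/
/-- For `a ≠ 0`, the real Lie algebra `a_{3,7}` with brackets `[η₁,η₂] = a·η₂ + η₃`,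
`[η₃,η₁] = η₂ - a·η₃`, `[η₂,η₃] = 0` admits no Nijenhuis eigenbasis. -/
theorem a37_no_nijenhuis_eigenbasis
    {g : Type*} [LieRing g] [LieAlgebra ℝ g] (a : ℝ) (ha : a ≠ 0)
    (η : Module.Basis (Fin 3) ℝ g)
    (h12 : ⁅η 0, η 1⁆ = a • η 1 + η 2) (h31 : ⁅η 2, η 0⁆ = η 1 - a • η 2)
    (h23 : ⁅η 1, η 2⁆ = 0) :
    ¬ ∃ ζ : Module.Basis (Fin 3) ℝ g, ∀ i j : Fin 3,
      ⁅ζ i, ζ j⁆ ∈ Submodule.span ℝ ({ζ i, ζ j} : Set g) := by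
  rintro ⟨ζ, hζ⟩
  set c : Fin 3 → Fin 3 → ℝ := fun i k => η.repr (ζ i) k with hc
  have h21 : ⁅η 1, η 0⁆ = -(a • η 1 + η 2) := by rw [← lie_skew, h12]
  have h02 : ⁅η 0, η 2⁆ = -(η 1 - a • η 2) := by rw [← lie_skew, h31]
  have h32 : ⁅η 2, η 1⁆ = 0 := by rw [← lie_skew, h23, neg_zero]
  have hbr : ∀ x y : g, ⁅x, y⁆ =
      ((η.repr x 0 * η.repr y 1 - η.repr x 1 * η.repr y 0) * a
        - (η.repr x 0 * η.repr y 2 - η.repr x 2 * η.repr y 0)) • η 1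
    + ((η.repr x 0 * η.repr y 1 - η.repr x 1 * η.repr y 0)
        + (η.repr x 0 * η.repr y 2 - η.repr x 2 * η.repr y 0) * a) • η 2 := by
    intro x y
    have hx : x = η.repr x 0 • η 0 + η.repr x 1 • η 1 + η.repr x 2 • η 2 := by
      have := η.sum_repr x
      rw [Fin.sum_univ_three] at this
      exact this.symm
    have hy : y = η.repr y 0 • η 0 + η.repr y 1 • η 1 + η.repr y 2 • η 2 := by
      have := η.sum_repr y
      rw [Fin.sum_univ_three] at this
      exact this.symm
    conv_lhs => rw [hx, hy]
    simp only [add_lie, lie_add, smul_lie, lie_smul, lie_self, h12, h23, h21, h02, h31, h32,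
      smul_zero, smul_neg, smul_add, smul_sub, smul_smul]
    module
  have key : ∀ i j : Fin 3, c i 0 * c j 1 - c i 1 * c j 0 = 0 ∧
      c i 0 * c j 2 - c i 2 * c j 0 = 0 := by
    intro i j
    have hmem := hζ i j
    rw [Submodule.mem_span_pair] at hmem
    obtain ⟨s, t, hst⟩ := hmem
    rw [hbr (ζ i) (ζ j)] at hst
    have h0 := congrArg (fun z => η.repr z 0) hst
    have h1 := congrArg (fun z => η.repr z 1) hst
    have h2 := congrArg (fun z => η.repr z 2) hst
    simp only [map_add, map_smul, Finsupp.add_apply, Finsupp.smul_apply, smul_eq_mul,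
      Module.Basis.repr_self, Finsupp.single_apply, Fin.reduceEq, reduceIte, if_true, if_false,
      mul_one, mul_zero, add_zero, zero_add] at h0 h1 h2
    have hpq : (c i 0 * c j 1 - c i 1 * c j 0)^2 + (c i 0 * c j 2 - c i 2 * c j 0)^2 = 0 := by
      simp only [hc] at h0 h1 h2 ⊢
      linear_combination (η.repr (ζ i) 0 * η.repr (ζ j) 2 - η.repr (ζ i) 2 * η.repr (ζ j) 0) * h1
        - (η.repr (ζ i) 0 * η.repr (ζ j) 1 - η.repr (ζ i) 1 * η.repr (ζ j) 0) * h2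
        - (η.repr (ζ i) 1 * η.repr (ζ j) 2 - η.repr (ζ i) 2 * η.repr (ζ j) 1) * h0
    constructor <;> nlinarith [sq_nonneg (c i 0 * c j 1 - c i 1 * c j 0),
      sq_nonneg (c i 0 * c j 2 - c i 2 * c j 0)]
  have hex : ∃ k, c k 0 ≠ 0 := by
    by_contra h
    push_neg at h
    have hsum := ζ.sum_repr (η 0)
    have h0 := congrArg (fun z => η.repr z 0) hsum
    simp only [map_sum, map_smul, Finsupp.coe_finset_sum, Finset.sum_apply,
      Finsupp.smul_apply, smul_eq_mul, Module.Basis.repr_self] at h0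
    rw [Fin.sum_univ_three] at h0
    simp only [hc] at h
    rw [h 0, h 1, h 2] at h0
    simp [Finsupp.single_apply] at h0
  obtain ⟨k, hk⟩ := hex
  set j : Fin 3 := if k = 0 then 1 else 0 with hj
  have hjk : j ≠ k := by
    by_cases hk0 : k = 0
    · simp [hj, hk0]
    · simp only [hj, if_neg hk0]
      exact fun h => hk0 h.symm
  have heq : c k 0 • ζ j = c j 0 • ζ k := by
    apply η.repr.injective
    ext m
    simp only [map_smul, Finsupp.smul_apply, smul_eq_mul]
    fin_cases m
    · show c k 0 * c j 0 = c j 0 * c k 0; ring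
    · show c k 0 * c j 1 = c j 0 * c k 1
      linear_combination (key k j).1
    · show c k 0 * c j 2 = c j 0 * c k 2
      linear_combination (key k j).2
  have := congrArg (fun z => ζ.repr z j) heq
  simp only [map_smul, Finsupp.smul_apply, smul_eq_mul, Module.Basis.repr_self,
    Finsupp.single_apply] at this
  rw [if_neg (Ne.symm hjk)] at this
  simp at this
  exact hk this
end

section
/- Let g be the real Lie algebra with basis η₁,η₂,η₃ and brackets [η₁,η₂] = η₂+η₃, [η₃,η₁] = -η₃, [η₂,η₃] = 0 (the algebra a_{3,6}). Then g does not admit a basis ζ₁,ζ₂,ζ₃ in which every pair of basis vectors spans a two-dimensional Lie subalgebra. -/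
/-- The real Lie algebra `a_{3,6}` with brackets `[η₁,η₂] = η₂+η₃`, `[η₃,η₁] = -η₃`,
`[η₂,η₃] = 0` admits no Nijenhuis eigenbasis. -/
theorem a36_no_nijenhuis_eigenbasis
    {g : Type*} [LieRing g] [LieAlgebra ℝ g]
    (η : Module.Basis (Fin 3) ℝ g)
    (h12 : ⁅η 0, η 1⁆ = η 1 + η 2) (h31 : ⁅η 2, η 0⁆ = -η 2)
    (h23 : ⁅η 1, η 2⁆ = 0) :
    ¬ ∃ ζ : Module.Basis (Fin 3) ℝ g, ∀ i j : Fin 3,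
      ⁅ζ i, ζ j⁆ ∈ Submodule.span ℝ ({ζ i, ζ j} : Set g) := by
  rintro ⟨ζ, hζ⟩
  -- derived bracket relations
  have h21 : ⁅η 1, η 0⁆ = -(η 1 + η 2) := by rw [← lie_skew, h12]
  have h02 : ⁅η 0, η 2⁆ = η 2 := by rw [← lie_skew, h31]; simp
  have h32 : ⁅η 2, η 1⁆ = 0 := by rw [← lie_skew, h23]; simp
  -- reconstruction from coordinates
  have hrepr : ∀ x : g, x = η.repr x 0 • η 0 + η.repr x 1 • η 1 + η.repr x 2 • η 2 := by
    intro x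
    have := η.sum_repr x
    rw [Fin.sum_univ_three] at this
    exact this.symm
  set A : Fin 3 → ℝ := fun i => η.repr (ζ i) 0 with hA
  set B : Fin 3 → ℝ := fun i => η.repr (ζ i) 1 with hB
  set C : Fin 3 → ℝ := fun i => η.repr (ζ i) 2 with hC
  have key : ∀ i j : Fin 3, A i * B j - A j * B i = 0 := by
    intro i j
    obtain ⟨s, t, hst⟩ := Submodule.mem_span_pair.mp (hζ i j)
    have hbr : ⁅ζ i, ζ j⁆ =
        (A i * B j - A j * B i) • η 1 +
        (A i * B j - A j * B i + A i * C j - A j * C i) • η 2 := by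
      conv_lhs => rw [hrepr (ζ i), hrepr (ζ j)]
      simp only [add_lie, lie_add, smul_lie, lie_smul, lie_self, h12, h21, h02, h31, h23, h32,
        smul_zero, zero_add, add_zero, smul_neg, smul_add, smul_smul]
      module
    rw [hbr] at hst
    have e0 := congrArg (fun x => η.repr x 0) hst
    have e1 := congrArg (fun x => η.repr x 1) hst
    have e2 := congrArg (fun x => η.repr x 2) hst
    simp only [map_add, map_smul, Module.Basis.repr_self, Finsupp.smul_apply, Finsupp.add_apply,
      Finsupp.single_apply, smul_eq_mul, ← hA, ← hB, ← hC] at e0 e1 e2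
    norm_num [Fin.ext_iff] at e0 e1 e2
    simp only [hA, hB, hC] at e0 e1 e2 ⊢
    have hsq : ((η.repr (ζ i)) 0 * (η.repr (ζ j)) 1 - (η.repr (ζ j)) 0 * (η.repr (ζ i)) 1) ^ 2 = 0 := by
      linear_combination (-((η.repr (ζ i)) 1 * (η.repr (ζ j)) 2 - (η.repr (ζ j)) 1 * (η.repr (ζ i)) 2)) * e0
        + (-((η.repr (ζ i)) 2 * (η.repr (ζ j)) 0 - (η.repr (ζ j)) 2 * (η.repr (ζ i)) 0)) * e1
        + (-((η.repr (ζ i)) 0 * (η.repr (ζ j)) 1 - (η.repr (ζ j)) 0 * (η.repr (ζ i)) 1)) * e2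
    exact pow_eq_zero_iff two_ne_zero |>.mp hsq
  by_cases hcase : ∀ i, A i = 0 ∧ B i = 0
  · -- η.coord 0 vanishes on the basis ζ, hence is zero, contradiction at η 0
    have hz : (η.coord 0 : g →ₗ[ℝ] ℝ) = 0 := by
      apply ζ.ext
      intro i
      simpa [Module.Basis.coord_apply, ← hA] using (hcase i).1
    have := congrArg (fun f : g →ₗ[ℝ] ℝ => f (η 0)) hz
    simp [Module.Basis.coord_apply] at this
  · push_neg at hcase
    obtain ⟨k, hk⟩ := hcase
    set f : g →ₗ[ℝ] ℝ := B k • η.coord 0 - A k • η.coord 1 with hf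
    have hz : f = 0 := by
      apply ζ.ext
      intro i
      have := key i k
      simp only [hf, LinearMap.sub_apply, LinearMap.smul_apply, Module.Basis.coord_apply,
        LinearMap.zero_apply, smul_eq_mul, ← hA, ← hB]
      nlinarith [key i k]
    have h0 := congrArg (fun f : g →ₗ[ℝ] ℝ => f (η 0)) hz
    have h1 := congrArg (fun f : g →ₗ[ℝ] ℝ => f (η 1)) hz
    simp only [hf, LinearMap.sub_apply, LinearMap.smul_apply, Module.Basis.coord_apply,
      Module.Basis.repr_self, LinearMap.zero_apply, smul_eq_mul] at h0 h1
    norm_num [Finsupp.single_apply, Fin.ext_iff] at h0 h1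
    exact hk h1 h0
end

section
/- The complex Heisenberg Lie algebra (basis η₁,η₂,η₃ with the single nonzero bracket [η₂,η₃] = η₁) does not admit a basis in which every pair of basis vectors spans a two-dimensional Lie subalgebra. -/
/-- The complex Heisenberg Lie algebra admits no basis in which every pair of basis
vectors spans a two-dimensional Lie subalgebra. -/
theorem heisenbergC_no_nijenhuis_eigenbasis
    {g : Type*} [LieRing g] [LieAlgebra ℂ g]
    (η : Module.Basis (Fin 3) ℂ g)
    (h23 : ⁅η 1, η 2⁆ = η 0) (h12 : ⁅η 0, η 1⁆ = 0) (h31 : ⁅η 2, η 0⁆ = 0) :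
    ¬ ∃ ζ : Module.Basis (Fin 3) ℂ g, ∀ i j : Fin 3,
      ⁅ζ i, ζ j⁆ ∈ Submodule.span ℂ ({ζ i, ζ j} : Set g) := by
  rintro ⟨ζ, hζ⟩
  -- bilinear expansion of brackets in any basis
  have brak : ∀ (b : Module.Basis (Fin 3) ℂ g) (x y : g),
      ⁅x, y⁆ = ∑ i, ∑ j, (b.repr x i * b.repr y j) • ⁅b i, b j⁆ := by
    intro b x y
    have sumlie : ∀ (s : Finset (Fin 3)) (f : Fin 3 → g) (z : g),
        ⁅∑ k ∈ s, f k, z⁆ = ∑ k ∈ s, ⁅f k, z⁆ := by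
      intro s f z
      induction s using Finset.induction_on with
      | empty => simp
      | insert _ _ hn ih => rw [Finset.sum_insert hn, Finset.sum_insert hn, add_lie, ih]
    have liesum : ∀ (s : Finset (Fin 3)) (z : g) (f : Fin 3 → g),
        ⁅z, ∑ k ∈ s, f k⁆ = ∑ k ∈ s, ⁅z, f k⁆ := by
      intro s z f
      induction s using Finset.induction_on with
      | empty => simp
      | insert _ _ hn ih => rw [Finset.sum_insert hn, Finset.sum_insert hn, lie_add, ih]
    conv_lhs => rw [← b.sum_repr x, ← b.sum_repr y]
    rw [sumlie]
    refine Finset.sum_congr rfl fun i _ => ?_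
    rw [smul_lie, liesum, Finset.smul_sum]
    refine Finset.sum_congr rfl fun j _ => ?_
    rw [lie_smul, smul_smul]
  have hη0 : (η 0 : g) ≠ 0 := η.ne_zero 0
  -- remaining structure constants
  have e02 : ⁅η 0, η 2⁆ = 0 := by rw [← lie_skew, h31, neg_zero]
  have e10 : ⁅η 1, η 0⁆ = 0 := by rw [← lie_skew, h12, neg_zero]
  have e21 : ⁅η 2, η 1⁆ = -η 0 := by rw [← lie_skew, h23]
  -- η 0 is central
  have central : ∀ x : g, ⁅η 0, x⁆ = 0 := by
    intro x
    rw [brak η]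
    refine Finset.sum_eq_zero fun i _ => Finset.sum_eq_zero fun j _ => ?_
    fin_cases i <;> fin_cases j <;>
      simp [h12, e02, e10, lie_self, Module.Basis.repr_self, Finsupp.single_apply]
  -- every bracket lies in span {η 0}
  have memS : ∀ x y : g, ⁅x, y⁆ ∈ Submodule.span ℂ ({η 0} : Set g) := by
    intro x y
    rw [brak η]
    refine Submodule.sum_mem _ fun i _ => Submodule.sum_mem _ fun j _ =>
      Submodule.smul_mem _ _ ?_
    fin_cases i <;> fin_cases j <;>
      simp [lie_self, h12, e02, e10, h23, h31, e21, neg_mem_iff,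
        Submodule.mem_span_singleton_self]
  -- some bracket of ζ basis vectors is nonzero
  have exists_pair : ∃ i j, ⁅ζ i, ζ j⁆ ≠ 0 := by
    by_contra h
    push_neg at h
    have h0 : ⁅η 1, η 2⁆ = 0 := by
      rw [brak ζ]
      exact Finset.sum_eq_zero fun i _ => Finset.sum_eq_zero fun j _ => by
        rw [h i j, smul_zero]
    rw [h23] at h0
    exact hη0 h0
  obtain ⟨i, j, hb⟩ := exists_pair
  obtain ⟨c, hc⟩ := Submodule.mem_span_singleton.mp (memS (ζ i) (ζ j))
  have hcne : c ≠ 0 := by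
    rintro rfl
    rw [zero_smul] at hc
    exact hb hc.symm
  have hmem : (η 0 : g) ∈ Submodule.span ℂ ({ζ i, ζ j} : Set g) := by
    have h2 := Submodule.smul_mem _ c⁻¹ (hζ i j)
    rwa [← hc, smul_smul, inv_mul_cancel₀ hcne, one_smul] at h2
  obtain ⟨α, β, hαβ⟩ := Submodule.mem_span_pair.mp hmem
  have hβ : β = 0 := by
    have h0 : ⁅η 0, ζ i⁆ = 0 := central _
    rw [← hαβ, add_lie, smul_lie, smul_lie, lie_self, smul_zero, zero_add,
      ← lie_skew (ζ j) (ζ i), smul_neg, neg_eq_zero] at h0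
    rcases smul_eq_zero.mp h0 with h | h
    · exact h
    · exact absurd h hb
  have hα : α = 0 := by
    have h0 : ⁅η 0, ζ j⁆ = 0 := central _
    rw [← hαβ, add_lie, smul_lie, smul_lie, lie_self, smul_zero, add_zero] at h0
    rcases smul_eq_zero.mp h0 with h | h
    · exact h
    · exact absurd h hb
  rw [hα, hβ, zero_smul, zero_smul, add_zero] at hαβ
  exact hη0 hαβ.symm
end
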